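/- Let k ≥ 3 and n ≥ k. For a real a with |a| ≤ k/2 and n/2 + a ∈ ℤ, let H_a^n = { i ∈ [0,n] : i ≡ n/2 + a (mod k) } and f(H_a^n) = Σ_{i ∈ H_a^n} C(n,i). If |a| < |b| ≤ k/2 with n/2+a, n/2+b ∈ ℤ, then f(H_a^n) > f(H_b^n). -/

import Mathlib

open Finset

def S (k n : ℕ) (r : ℤ) : ℕ :=
  ∑ i ∈ (Finset.range (n + 1)).filter (fun i : ℕ => (i : ℤ) % k = r % k), n.choose i

lemma S_congr (k n : ℕ) {r r' : ℤ} (h : r % k = r' % k) : S k n r = S k n r' := by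
  unfold S; rw [h]

lemma S_symm (k n : ℕ) (r : ℤ) : S k n ((n : ℤ) - r) = S k n r := by
  unfold S
  refine Finset.sum_nbij' (fun i => n - i) (fun i => n - i) ?_ ?_ ?_ ?_ ?_
  · intro i hi
    simp only [Finset.mem_filter, Finset.mem_range] at hi ⊢
    refine ⟨by omega, ?_⟩
    have h2 : ((n - i : ℕ) : ℤ) = (n : ℤ) - i := by omega
    rw [h2]
    have : Int.ModEq k i ((n:ℤ) - r) := hi.2
    exact (Int.ModEq.sub (Int.ModEq.refl (n:ℤ)) this).trans (by rw [sub_sub_cancel])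
  · intro i hi
    simp only [Finset.mem_filter, Finset.mem_range] at hi ⊢
    refine ⟨by omega, ?_⟩
    have h2 : ((n - i : ℕ) : ℤ) = (n : ℤ) - i := by omega
    rw [h2]
    have : Int.ModEq k i r := hi.2
    exact Int.ModEq.sub (Int.ModEq.refl (n:ℤ)) this
  · intro i hi; simp only [Finset.mem_filter, Finset.mem_range] at hi; omega
  · intro i hi; simp only [Finset.mem_filter, Finset.mem_range] at hi; omega
  · intro i hi
    simp only [Finset.mem_filter, Finset.mem_range] at hi
    exact (Nat.choose_symm (by omega : i ≤ n)).symm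

lemma S_pascal (k n : ℕ) (r : ℤ) : S k (n + 1) r = S k n (r - 1) + S k n r := by
  unfold S
  rw [Finset.sum_filter, Finset.sum_filter, Finset.sum_filter]
  rw [Finset.sum_range_succ' (fun i => if (i : ℤ) % k = r % k then (n+1).choose i else 0) (n+1)]
  have key : ∀ i ∈ Finset.range (n+1),
      (if ((i+1 : ℕ) : ℤ) % k = r % k then (n+1).choose (i+1) else 0)
      = (if (i : ℤ) % k = (r - 1) % k then n.choose i else 0)
        + (if ((i+1 : ℕ) : ℤ) % k = r % k then n.choose (i+1) else 0) := by
    intro i _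
    have hmod : (((i+1 : ℕ) : ℤ) % k = r % k) ↔ ((i : ℤ) % k = (r - 1) % k) := by
      constructor
      · intro h
        have : Int.ModEq k (i+1) r := by push_cast at h ⊢; exact h
        have := this.sub (Int.ModEq.refl 1)
        simp at this
        exact this
      · intro h
        have : Int.ModEq k i (r-1) := h
        have := this.add (Int.ModEq.refl 1)
        push_cast
        simp [sub_add_cancel] at this
        exact this
    rw [Nat.choose_succ_succ]
    by_cases h : ((i+1 : ℕ) : ℤ) % k = r % k
    · rw [if_pos h, if_pos (hmod.mp h), if_pos h]
    · rw [if_neg h, if_neg (fun hh => h (hmod.mpr hh)), if_neg h]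
  rw [Finset.sum_congr rfl key, Finset.sum_add_distrib]
  have e1 := Finset.sum_range_succ' (fun i => if (i : ℤ) % k = r % k then n.choose i else 0) (n+1)
  have e2 := Finset.sum_range_succ (fun i => if (i : ℤ) % k = r % k then n.choose i else 0) (n+1)
  simp only [Nat.choose_succ_self, ite_self, Nat.choose_zero_right] at e1 e2 ⊢
  omega

lemma choose_lt_succ {k a : ℕ} (h : 2 * (a + 1) ≤ k) : k.choose a < k.choose (a + 1) := by
  have h1 := Nat.choose_succ_right_eq k a
  have hpos : 0 < k.choose a := Nat.choose_pos (by omega)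
  have hlt : k.choose a * (a + 1) < k.choose a * (k - a) := by
    have : a + 1 < k - a := by omega
    exact mul_lt_mul_of_pos_left this hpos
  nlinarith [h1, hlt]

lemma choose_lt_choose {k a b : ℕ} (hab : a < b) (hb : 2 * b ≤ k) : k.choose a < k.choose b := by
  induction b with
  | zero => omega
  | succ m ih =>
    rcases Nat.lt_or_ge a m with h | h
    · exact (ih h (by omega)).trans (choose_lt_succ hb)
    · have : a = m := by omega
      subst this
      exact choose_lt_succ hb

lemma choose_min {k a : ℕ} (ha : a ≤ k) : k.choose a = k.choose (min a (k - a)) := by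
  rcases Nat.le_total a (k - a) with h' | h'
  · rw [min_eq_left h']
  · rw [min_eq_right h', ← Nat.choose_symm ha]

/-- strict monotonicity in distance from the middle -/
lemma choose_lt_of_dist {k : ℕ} {a b : ℕ} (ha : a ≤ k) (hb : b ≤ k)
    (h : |2 * (a : ℤ) - k| < |2 * (b : ℤ) - k|) : k.choose b < k.choose a := by
  rw [choose_min ha, choose_min hb]
  have hBA : min b (k - b) < min a (k - a) := by
    rcases abs_cases (2 * (a : ℤ) - k) with ⟨e1, _⟩ | ⟨e1, _⟩ <;>
      rcases abs_cases (2 * (b : ℤ) - k) with ⟨e2, _⟩ | ⟨e2, _⟩ <;> omega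
  exact choose_lt_choose hBA (by omega)

lemma S_base_mid {k : ℕ} {p : ℤ} (hp0 : 0 < p) (hpk : p < k) :
    S k k p = k.choose p.toNat := by
  unfold S
  have hpk' : p % k = p := Int.emod_eq_of_lt (by omega) hpk
  have hself : (k : ℤ) % k = 0 := Int.emod_self
  have hset : (Finset.range (k + 1)).filter (fun i : ℕ => (i : ℤ) % k = p % k)
      = {p.toNat} := by
    ext i
    simp only [Finset.mem_filter, Finset.mem_range, Finset.mem_singleton]
    constructor
    · rintro ⟨h1, h2⟩
      rw [hpk'] at h2
      rcases Nat.lt_or_ge i k with h | h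
      · have hi' : (i : ℤ) % k = i := Int.emod_eq_of_lt (by positivity) (by exact_mod_cast h)
        omega
      · have hik : i = k := by omega
        subst hik
        rw [hself] at h2
        omega
    · intro h
      subst h
      refine ⟨by omega, ?_⟩
      rw [hpk', Int.toNat_of_nonneg (by omega)]
      exact Int.emod_eq_of_lt (by omega) (by omega)
  rw [hset, Finset.sum_singleton]

lemma S_base_zero {k : ℕ} (hk : 1 ≤ k) {q : ℤ} (hq : q % k = 0) : S k k q = 2 := by
  unfold S
  have hself : (k : ℤ) % k = 0 := Int.emod_self
  have hset : (Finset.range (k + 1)).filter (fun i : ℕ => (i : ℤ) % k = q % k)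
      = {0, k} := by
    ext i
    simp only [Finset.mem_filter, Finset.mem_range, Finset.mem_insert, Finset.mem_singleton]
    rw [hq]
    constructor
    · rintro ⟨h1, h2⟩
      rcases Nat.lt_or_ge i k with h | h
      · left
        have hi' : (i : ℤ) % k = i := Int.emod_eq_of_lt (by positivity) (by exact_mod_cast h)
        omega
      · right; omega
    · rintro (h | h) <;> subst h
      · refine ⟨by omega, by simp⟩
      · exact ⟨by omega, hself⟩
  rw [hset]
  rw [Finset.sum_pair (by omega : (0:ℕ) ≠ k)]
  simp

lemma S_eq_of_abs_eq (k n : ℕ) {p q : ℤ} (h : |2 * p - (n:ℤ)| = |2 * q - (n:ℤ)|) :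
    S k n p = S k n q := by
  rcases abs_eq_abs.mp h with h' | h'
  · have : p = q := by omega
    rw [this]
  · have : p = (n : ℤ) - q := by omega
    rw [this, S_symm]

lemma T_base {k : ℕ} (hk : 3 ≤ k) (p q : ℤ)
    (h1 : |2 * p - (k:ℤ)| < |2 * q - (k:ℤ)|) (h2 : |2 * q - (k:ℤ)| ≤ k) :
    S k k q < S k k p := by
  have hp0 : 0 < p := by
    rcases abs_cases (2 * p - (k:ℤ)) with ⟨e1, _⟩ | ⟨e1, _⟩ <;>
      rcases abs_cases (2 * q - (k:ℤ)) with ⟨e2, _⟩ | ⟨e2, _⟩ <;> omega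
  have hpk : p < k := by
    rcases abs_cases (2 * p - (k:ℤ)) with ⟨e1, _⟩ | ⟨e1, _⟩ <;>
      rcases abs_cases (2 * q - (k:ℤ)) with ⟨e2, _⟩ | ⟨e2, _⟩ <;> omega
  have hq0 : 0 ≤ q := by
    rcases abs_cases (2 * q - (k:ℤ)) with ⟨e2, _⟩ | ⟨e2, _⟩ <;> omega
  have hqk : q ≤ k := by
    rcases abs_cases (2 * q - (k:ℤ)) with ⟨e2, _⟩ | ⟨e2, _⟩ <;> omega
  rw [S_base_mid hp0 hpk]
  have hptk : p.toNat ≤ k := by omega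
  have hptc : ((p.toNat : ℕ) : ℤ) = p := Int.toNat_of_nonneg (by omega)
  -- lower bound : k.choose p.toNat > 2
  have hmid : 2 < k.choose p.toNat := by
    rw [choose_min hptk]
    have h1' : 1 ≤ min p.toNat (k - p.toNat) := by omega
    have hle : k.choose 1 ≤ k.choose (min p.toNat (k - p.toNat)) := by
      rcases eq_or_lt_of_le h1' with h | h
      · rw [← h]
      · exact le_of_lt (choose_lt_choose h (by omega))
    rw [Nat.choose_one_right] at hle
    omega
  rcases eq_or_lt_of_le hq0 with hq | hq
  · rw [S_base_zero (by omega) (by rw [← hq]; simp)]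
    exact hmid
  rcases eq_or_lt_of_le hqk with hq' | hq'
  · rw [S_base_zero (by omega) (by rw [hq']; exact Int.emod_self)]
    exact hmid
  · rw [S_base_mid hq hq']
    have hqtc : ((q.toNat : ℕ) : ℤ) = q := Int.toNat_of_nonneg (by omega)
    apply choose_lt_of_dist hptk (by omega)
    rw [hptc, hqtc]
    exact h1

lemma T_main {k : ℕ} (hk : 3 ≤ k) : ∀ n : ℕ, k ≤ n → ∀ p q : ℤ,
    |2 * p - (n:ℤ)| < |2 * q - (n:ℤ)| → |2 * q - (n:ℤ)| ≤ k → S k n q < S k n p := by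
  intro n hn
  induction n, hn using Nat.le_induction with
  | base => exact fun p q h1 h2 => T_base hk p q h1 h2
  | succ n hn IH =>
    intro p q h1 h2
    -- weak version at level n
    have W : ∀ p' q' : ℤ, |2 * p' - (n:ℤ)| ≤ |2 * q' - (n:ℤ)| → |2 * q' - (n:ℤ)| ≤ k →
        S k n q' ≤ S k n p' := by
      intro p' q' hle hk'
      rcases eq_or_lt_of_le hle with h | h
      · exact le_of_eq (S_eq_of_abs_eq k n h.symm)
      · exact le_of_lt (IH p' q' h hk')
    -- normalize p to the right of the middle
    obtain ⟨p', hp'1, hp'2⟩ : ∃ p', 2 * p' - ((n+1:ℕ):ℤ) = |2 * p - ((n+1:ℕ):ℤ)| ∧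
        S k (n+1) p' = S k (n+1) p := by
      rcases le_or_gt 0 (2 * p - ((n+1:ℕ):ℤ)) with h | h
      · exact ⟨p, (abs_of_nonneg h).symm, rfl⟩
      · refine ⟨((n+1:ℕ):ℤ) - p, ?_, S_symm k (n+1) p⟩
        rw [abs_of_neg h]; ring
    obtain ⟨q', hq'1, hq'2⟩ : ∃ q', 2 * q' - ((n+1:ℕ):ℤ) = |2 * q - ((n+1:ℕ):ℤ)| ∧
        S k (n+1) q' = S k (n+1) q := by
      rcases le_or_gt 0 (2 * q - ((n+1:ℕ):ℤ)) with h | h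
      · exact ⟨q, (abs_of_nonneg h).symm, rfl⟩
      · refine ⟨((n+1:ℕ):ℤ) - q, ?_, S_symm k (n+1) q⟩
        rw [abs_of_neg h]; ring
    rw [← hp'2, ← hq'2, S_pascal, S_pascal]
    -- basic range facts
    have hd : 0 ≤ 2 * p' - ((n+1:ℕ):ℤ) ∧ 2 * p' - ((n+1:ℕ):ℤ) < 2 * q' - ((n+1:ℕ):ℤ)
        ∧ 2 * q' - ((n+1:ℕ):ℤ) ≤ k := by
      refine ⟨by rw [hp'1]; exact abs_nonneg _, by rw [hp'1, hq'1]; exact h1,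
        by rw [hq'1]; exact h2⟩
    obtain ⟨hdp0, hdpq, hdqk⟩ := hd
    push_cast at hdp0 hdpq hdqk
    rcases lt_or_eq_of_le hdqk with hq_lt | hq_eq
    · -- 2 * q' - (n+1) < k
      apply Nat.add_lt_add_of_le_of_lt
      · apply W (p' - 1) (q' - 1)
        · rcases abs_cases (2 * (p'-1) - (n:ℤ)) with ⟨e1, _⟩ | ⟨e1, _⟩ <;>
            rcases abs_cases (2 * (q'-1) - (n:ℤ)) with ⟨e2, _⟩ | ⟨e2, _⟩ <;> omega
        · rcases abs_cases (2 * (q'-1) - (n:ℤ)) with ⟨e2, _⟩ | ⟨e2, _⟩ <;> omega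
      · apply IH p' q'
        · rcases abs_cases (2 * p' - (n:ℤ)) with ⟨e1, _⟩ | ⟨e1, _⟩ <;>
            rcases abs_cases (2 * q' - (n:ℤ)) with ⟨e2, _⟩ | ⟨e2, _⟩ <;> omega
        · rcases abs_cases (2 * q' - (n:ℤ)) with ⟨e2, _⟩ | ⟨e2, _⟩ <;> omega
    · -- 2 * q' - (n+1) = k : shift q' by k
      have hshift : S k n q' = S k n (q' - k) := by
        apply S_congr
        have h0 : Int.ModEq (k:ℤ) (k:ℤ) 0 := by unfold Int.ModEq; simp
        have h3 := (Int.ModEq.refl q').sub h0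
        have h4 := h3.symm
        simp only [sub_zero] at h4
        exact h4
      rw [hshift]
      have hcomp : |2 * p' - (n:ℤ)| ≤ |2 * (q' - k) - (n:ℤ)| := by
        rcases abs_cases (2 * p' - (n:ℤ)) with ⟨e1, _⟩ | ⟨e1, _⟩ <;>
          rcases abs_cases (2 * (q' - k) - (n:ℤ)) with ⟨e2, _⟩ | ⟨e2, _⟩ <;> omega
      rcases lt_or_eq_of_le hcomp with hc | hc
      · apply Nat.add_lt_add_of_le_of_lt
        · apply W (p' - 1) (q' - 1)
          · rcases abs_cases (2 * (p'-1) - (n:ℤ)) with ⟨e1, _⟩ | ⟨e1, _⟩ <;>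
              rcases abs_cases (2 * (q'-1) - (n:ℤ)) with ⟨e2, _⟩ | ⟨e2, _⟩ <;> omega
          · rcases abs_cases (2 * (q'-1) - (n:ℤ)) with ⟨e2, _⟩ | ⟨e2, _⟩ <;> omega
        · apply IH p' (q' - k)
          · exact hc
          · rcases abs_cases (2 * (q' - k) - (n:ℤ)) with ⟨e2, _⟩ | ⟨e2, _⟩ <;> omega
      · apply Nat.add_lt_add_of_lt_of_le
        · apply IH (p' - 1) (q' - 1)
          · have hpk2 : 2 * p' - ((n:ℤ)+1) = k - 2 := by
              rcases abs_cases (2 * p' - (n:ℤ)) with ⟨e1, _⟩ | ⟨e1, _⟩ <;>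
                rcases abs_cases (2 * (q' - k) - (n:ℤ)) with ⟨e2, _⟩ | ⟨e2, _⟩ <;> omega
            rcases abs_cases (2 * (p'-1) - (n:ℤ)) with ⟨e1, _⟩ | ⟨e1, _⟩ <;>
              rcases abs_cases (2 * (q'-1) - (n:ℤ)) with ⟨e2, _⟩ | ⟨e2, _⟩ <;> omega
          · rcases abs_cases (2 * (q'-1) - (n:ℤ)) with ⟨e2, _⟩ | ⟨e2, _⟩ <;> omega
        · exact le_of_eq (S_eq_of_abs_eq k n hc.symm)

/-- For `k ≥ 3`, `n ≥ k`: writing `p = n/2 + a` and `q = n/2 + b` (so that the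
integrality conditions hold and `|a| < |b| ≤ k/2` becomes `|2p - n| < |2q - n| ≤ k`),
the binomial sum over the residue class of `p` mod `k` strictly exceeds
the one over the residue class of `q` mod `k`:  `f(H_a^n) > f(H_b^n)`. -/
theorem closer_class_bigger (n k : ℕ) (hk : 3 ≤ k) (hn : k ≤ n) (p q : ℤ)
    (hab : |2 * p - (n : ℤ)| < |2 * q - (n : ℤ)|)
    (hb : |2 * q - (n : ℤ)| ≤ (k : ℤ)) :
    ∑ i ∈ (Finset.range (n + 1)).filter (fun i : ℕ => (i : ℤ) % k = q % k), n.choose i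
      < ∑ i ∈ (Finset.range (n + 1)).filter (fun i : ℕ => (i : ℤ) % k = p % k),
          n.choose i := T_main hk n hn p q hab hb
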